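/- If a random vector X = (X₁,…,Xₙ) is positively dependent through the stochastic ordering (PDS), then it is positive orthant dependent (POD): P(X ≤ x) ≥ ∏ᵢ P(Xᵢ ≤ xᵢ) and P(X > x) ≥ ∏ᵢ P(Xᵢ > xᵢ) for all x ∈ ℝⁿ. -/

import Mathlib

open MeasureTheory ProbabilityTheory Set

noncomputable section

variable {Ω Ω' : Type*} [MeasurableSpace Ω] [MeasurableSpace Ω']

/-- Distribution function of a random variable. -/
def distFun (μ : Measure Ω) (X : Ω → ℝ) (x : ℝ) : ℝ := (μ {ω | X ω ≤ x}).toReal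

/-- Value-at-Risk at level α: `VaR_α(X) = inf {x | F_X(x) ≥ 1-α}`. -/
def VaR (μ : Measure Ω) (X : Ω → ℝ) (α : ℝ) : ℝ := sInf {x | 1 - α ≤ distFun μ X x}

/-- Range-Value-at-Risk with parameters α, β (for β > 0). -/
def RVaR (μ : Measure Ω) (X : Ω → ℝ) (α β : ℝ) : ℝ := (1/β) * ∫ s in α..(α+β), VaR μ X s

/-- Usual stochastic order. -/
def le_st (μ : Measure Ω) (X : Ω → ℝ) (ν : Measure Ω') (Y : Ω' → ℝ) : Prop :=
  ∀ f : ℝ → ℝ, Monotone f → Integrable (fun ω => f (X ω)) μ →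
    Integrable (fun ω => f (Y ω)) ν → ∫ ω, f (X ω) ∂μ ≤ ∫ ω, f (Y ω) ∂ν

/-- Convex order. -/
def le_cx (μ : Measure Ω) (X : Ω → ℝ) (ν : Measure Ω') (Y : Ω' → ℝ) : Prop :=
  ∀ f : ℝ → ℝ, ConvexOn ℝ univ f → Integrable (fun ω => f (X ω)) μ →
    Integrable (fun ω => f (Y ω)) ν → ∫ ω, f (X ω) ∂μ ≤ ∫ ω, f (Y ω) ∂ν

/-- Increasing convex order. -/
def le_icx (μ : Measure Ω) (X : Ω → ℝ) (ν : Measure Ω') (Y : Ω' → ℝ) : Prop :=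
  ∀ f : ℝ → ℝ, Monotone f → ConvexOn ℝ univ f → Integrable (fun ω => f (X ω)) μ →
    Integrable (fun ω => f (Y ω)) ν → ∫ ω, f (X ω) ∂μ ≤ ∫ ω, f (Y ω) ∂ν

/-- Admissible ceded loss functions: `0 ≤ f(x) ≤ x` with both `f` and the
retained loss `x - f(x)` increasing. -/
def Ceded (f : ℝ → ℝ) : Prop :=
  Monotone f ∧ Monotone (fun x => x - f x) ∧ ∀ x, 0 ≤ x → 0 ≤ f x ∧ f x ≤ x

/-- Layer reinsurance treaty with deductible `a` and upper bound `b`. -/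
def layer (a b x : ℝ) : ℝ := min (max (x - a) 0) b

/-- Joint distribution function of a random vector. -/
def jointCDF {n : ℕ} (μ : Measure Ω) (X : Fin n → Ω → ℝ) (x : Fin n → ℝ) : ℝ :=
  (μ {ω | ∀ i, X i ω ≤ x i}).toReal

/-- All one-dimensional marginals are uniform on [0,1]. -/
def uniformMarginals {n : ℕ} (ν : Measure (Fin n → ℝ)) : Prop :=
  ∀ i, Measure.map (fun u => u i) ν = volume.restrict (Icc (0:ℝ) 1)

/-- `C` is (the distribution function of) an `n`-dimensional copula. -/
def IsCopula {n : ℕ} (C : (Fin n → ℝ) → ℝ) : Prop :=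
  ∃ ν : Measure (Fin n → ℝ), IsProbabilityMeasure ν ∧ uniformMarginals ν ∧
    ∀ x, C x = (ν {u | ∀ i, u i ≤ x i}).toReal

/-- `C` is a copula of the random vector `X`. -/
def HasCopula {n : ℕ} (μ : Measure Ω) (X : Fin n → Ω → ℝ) (C : (Fin n → ℝ) → ℝ) : Prop :=
  IsCopula C ∧ ∀ x : Fin n → ℝ, jointCDF μ X x = C (fun i => distFun μ (X i) (x i))

/-- Positively dependent through the stochastic ordering: for each `i`,
`E[f(X_{-i}) | X_i = x]` is increasing in `x` for every componentwise increasing `f`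
(not depending on coordinate `i`). -/
def PDS {n : ℕ} (μ : Measure Ω) (X : Fin n → Ω → ℝ) : Prop :=
  ∀ i : Fin n, ∀ f : (Fin n → ℝ) → ℝ, Monotone f →
    (∀ a b : Fin n → ℝ, (∀ j, j ≠ i → a j = b j) → f a = f b) →
    ∃ g : ℝ → ℝ, Monotone g ∧
      (μ[(fun ω => f (fun j => X j ω)) | MeasurableSpace.comap (X i) (borel ℝ)]
        =ᵐ[μ] fun ω => g (X i ω))

/-- `C` is a PDS copula. -/
def IsPDSCopula {n : ℕ} (C : (Fin n → ℝ) → ℝ) : Prop :=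
  ∃ ν : Measure (Fin n → ℝ), IsProbabilityMeasure ν ∧ uniformMarginals ν ∧
    (∀ x, C x = (ν {u | ∀ i, u i ≤ x i}).toReal) ∧ PDS ν (fun i u => u i)

/-- Positive orthant dependence. -/
def POD {n : ℕ} (μ : Measure Ω) (X : Fin n → Ω → ℝ) : Prop :=
  ∀ x : Fin n → ℝ,
    (∏ i, (μ {ω | X i ω ≤ x i}).toReal) ≤ (μ {ω | ∀ i, X i ω ≤ x i}).toReal ∧
    (∏ i, (μ {ω | x i < X i ω}).toReal) ≤ (μ {ω | ∀ i, x i < X i ω}).toReal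

/-- A comonotone random vector. -/
def Comonotone {m : ℕ} (Z : Fin m → Ω → ℝ) : Prop :=
  ∀ i j ω ω', 0 ≤ (Z i ω - Z i ω') * (Z j ω - Z j ω')


/-- indicator of an upper set is monotone -/
lemma indicator_one_mono' {α : Type*} [Preorder α] {B : Set α} (hB : IsUpperSet B) :
    Monotone (B.indicator (fun _ => (1:ℝ))) := by
  intro a b hab
  by_cases ha : a ∈ B
  · rw [Set.indicator_of_mem ha, Set.indicator_of_mem (hB hab ha)]
  · rw [Set.indicator_of_notMem ha]
    exact Set.indicator_nonneg (fun _ _ => zero_le_one) b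

lemma indicator_one_mem_Icc' {α : Type*} {B : Set α} (a : α) :
    B.indicator (fun _ => (1:ℝ)) a ∈ Icc (0:ℝ) 1 := by
  by_cases h : a ∈ B <;> simp [Set.indicator_apply, h]

lemma integrable_of_mem01 {Ω : Type*} [MeasurableSpace Ω] {μ : Measure Ω} [IsProbabilityMeasure μ]
    {f : Ω → ℝ} (hm : Measurable f) (hb : ∀ ω, |f ω| ≤ 1) : Integrable f μ :=
  Integrable.mono' (integrable_const 1) hm.aestronglyMeasurable
    (Filter.Eventually.of_forall fun ω => by simpa [Real.norm_eq_abs] using hb ω)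

lemma chebyshev_corr {Ω : Type*} [MeasurableSpace Ω] (μ : Measure Ω) [IsProbabilityMeasure μ]
    (Z : Ω → ℝ) (hZ : Measurable Z) (φ ψ : ℝ → ℝ) (hφ : Monotone φ) (hψ : Monotone ψ)
    (hφ01 : ∀ t, φ t ∈ Icc (0:ℝ) 1) (hψ01 : ∀ t, ψ t ∈ Icc (0:ℝ) 1) :
    (∫ ω, φ (Z ω) ∂μ) * (∫ ω, ψ (Z ω) ∂μ) ≤ ∫ ω, φ (Z ω) * ψ (Z ω) ∂μ := by
  have hΦm : Measurable fun ω => φ (Z ω) := hφ.measurable.comp hZ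
  have hΨm : Measurable fun ω => ψ (Z ω) := hψ.measurable.comp hZ
  have habs : ∀ (h : ℝ → ℝ), (∀ t, h t ∈ Icc (0:ℝ) 1) → ∀ ω, |h (Z ω)| ≤ 1 := by
    intro h hb ω
    have := hb (Z ω)
    rw [abs_le]; constructor <;> [linarith [this.1]; exact this.2]
  have hΦi : Integrable (fun ω => φ (Z ω)) μ := integrable_of_mem01 hΦm (habs φ hφ01)
  have hΨi : Integrable (fun ω => ψ (Z ω)) μ := integrable_of_mem01 hΨm (habs ψ hψ01)
  have hPi : Integrable (fun ω => φ (Z ω) * ψ (Z ω)) μ := by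
    refine integrable_of_mem01 (hΦm.mul hΨm) (fun ω => ?_)
    have h1 := hφ01 (Z ω); have h2 := hψ01 (Z ω)
    rw [abs_le]; constructor
    · nlinarith [h1.1, h2.1]
    · nlinarith [h1.1, h2.1, h1.2, h2.2]
  set Iφ := ∫ ω, φ (Z ω) ∂μ with hIφ
  set Iψ := ∫ ω, ψ (Z ω) ∂μ with hIψ
  set IP := ∫ ω, φ (Z ω) * ψ (Z ω) ∂μ with hIP
  have hnn : (0:ℝ) ≤ ∫ ω, ∫ ω', (φ (Z ω) - φ (Z ω')) * (ψ (Z ω) - ψ (Z ω')) ∂μ ∂μ := by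
    refine integral_nonneg fun ω => integral_nonneg fun ω' => ?_
    rcases le_total (Z ω') (Z ω) with h | h
    · exact mul_nonneg (sub_nonneg.2 (hφ h)) (sub_nonneg.2 (hψ h))
    · have h0 : (0:ℝ) ≤ (φ (Z ω') - φ (Z ω)) * (ψ (Z ω') - ψ (Z ω)) :=
        mul_nonneg (sub_nonneg.2 (hφ h)) (sub_nonneg.2 (hψ h))
      exact le_of_le_of_eq h0 (by ring)
  have hinner : ∀ ω, ∫ ω', (φ (Z ω) - φ (Z ω')) * (ψ (Z ω) - ψ (Z ω')) ∂μ
      = φ (Z ω) * ψ (Z ω) - φ (Z ω) * Iψ - ψ (Z ω) * Iφ + IP := by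
    intro ω
    have hre : (fun ω' => (φ (Z ω) - φ (Z ω')) * (ψ (Z ω) - ψ (Z ω'))) =
        fun ω' => φ (Z ω) * ψ (Z ω) - φ (Z ω) * ψ (Z ω') - ψ (Z ω) * φ (Z ω') +
          φ (Z ω') * ψ (Z ω') := by
      funext ω'; ring
    have h2 : Integrable (fun ω' => φ (Z ω) * ψ (Z ω')) μ := hΨi.const_mul _
    have h3 : Integrable (fun ω' => ψ (Z ω) * φ (Z ω')) μ := hΦi.const_mul _
    have h12 : Integrable (fun ω' => φ (Z ω) * ψ (Z ω) - φ (Z ω) * ψ (Z ω')) μ :=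
      (integrable_const _).sub h2
    have h123 : Integrable
        (fun ω' => φ (Z ω) * ψ (Z ω) - φ (Z ω) * ψ (Z ω') - ψ (Z ω) * φ (Z ω')) μ := h12.sub h3
    rw [hre, integral_add h123 hPi, integral_sub h12 h3, integral_sub (integrable_const _) h2,
]
    simp [integral_const_mul, measure_univ]
    rfl
  have houter : ∫ ω, (φ (Z ω) * ψ (Z ω) - φ (Z ω) * Iψ - ψ (Z ω) * Iφ + IP) ∂μ
      = IP - Iφ * Iψ - Iψ * Iφ + IP := by
    have k1 : Integrable (fun ω => φ (Z ω) * Iψ) μ := hΦi.mul_const _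
    have k2 : Integrable (fun ω => ψ (Z ω) * Iφ) μ := hΨi.mul_const _
    have k12 : Integrable (fun ω => φ (Z ω) * ψ (Z ω) - φ (Z ω) * Iψ) μ := hPi.sub k1
    have k123 : Integrable (fun ω => φ (Z ω) * ψ (Z ω) - φ (Z ω) * Iψ - ψ (Z ω) * Iφ) μ :=
      k12.sub k2
    rw [integral_add k123 (integrable_const _), integral_sub k12 k2, integral_sub hPi k1,
]
    simp [integral_mul_const, measure_univ]
    rfl
  simp_rw [hinner] at hnn
  rw [houter] at hnn
  nlinarith [hnn]

lemma integral_indicator_one'' {Ω : Type*} [MeasurableSpace Ω] {μ : Measure Ω} {S : Set Ω}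
    (hS : MeasurableSet S) :
    ∫ ω, S.indicator (fun _ => (1:ℝ)) ω ∂μ = (μ S).toReal := by
  have h : S.indicator (fun _ => (1:ℝ)) = S.indicator (1 : Ω → ℝ) := rfl
  rw [h, integral_indicator_one hS]
  rfl

lemma comap_neg_real : MeasurableSpace.comap (fun t : ℝ => -t) (borel ℝ) = borel ℝ := by
  have hb : (borel ℝ) = (inferInstance : MeasurableSpace ℝ) := (BorelSpace.measurable_eq).symm
  rw [hb]
  refine le_antisymm (measurable_iff_comap_le.mp measurable_neg) ?_
  have h1 : MeasurableSpace.comap (fun t : ℝ => -t) (inferInstance : MeasurableSpace ℝ)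
      ≤ (inferInstance : MeasurableSpace ℝ) := measurable_iff_comap_le.mp measurable_neg
  have h3 : MeasurableSpace.comap ((fun t : ℝ => -t) ∘ (fun t : ℝ => -t))
      (inferInstance : MeasurableSpace ℝ) = (inferInstance : MeasurableSpace ℝ) := by
    have hid : ((fun t : ℝ => -t) ∘ (fun t : ℝ => -t)) = id := by funext t; simp
    rw [hid, MeasurableSpace.comap_id]
  calc (inferInstance : MeasurableSpace ℝ)
      = MeasurableSpace.comap ((fun t : ℝ => -t) ∘ (fun t : ℝ => -t))
        (inferInstance : MeasurableSpace ℝ) := h3.symm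
    _ = MeasurableSpace.comap (fun t : ℝ => -t)
        (MeasurableSpace.comap (fun t : ℝ => -t) (inferInstance : MeasurableSpace ℝ)) :=
        (MeasurableSpace.comap_comp).symm
    _ ≤ MeasurableSpace.comap (fun t : ℝ => -t) (inferInstance : MeasurableSpace ℝ) :=
        MeasurableSpace.comap_mono h1

lemma pds_neg {n : ℕ} {μ : Measure Ω} {X : Fin n → Ω → ℝ} (h : PDS μ X) :
    PDS μ (fun i ω => -(X i ω)) := by
  intro i f hf hdep
  obtain ⟨g, hg, hae⟩ := h i (fun u => -(f (fun j => -(u j))))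
    (by
      intro u v huv
      have hle : (fun j => -(v j)) ≤ fun j => -(u j) := fun j => neg_le_neg (huv j)
      exact neg_le_neg (hf hle))
    (by
      intro a b hab
      show -(f fun j => -(a j)) = -(f fun j => -(b j))
      have := hdep (fun j => -(a j)) (fun j => -(b j))
        (fun j hj => by rw [hab j hj])
      rw [this])
  refine ⟨fun t => -(g (-t)), fun a b hab => neg_le_neg (hg (neg_le_neg hab)), ?_⟩
  have hσ : MeasurableSpace.comap (fun ω => -(X i ω)) (borel ℝ)
      = MeasurableSpace.comap (X i) (borel ℝ) := by
    have hcomp : (fun ω => -(X i ω)) = (fun t : ℝ => -t) ∘ (X i) := rfl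
    rw [hcomp, ← MeasurableSpace.comap_comp, comap_neg_real]
  have hneg : μ[-(fun ω => f (fun j => -(X j ω)))|MeasurableSpace.comap (X i) (borel ℝ)]
      =ᵐ[μ] fun ω => g (X i ω) := hae
  have h3 : μ[(fun ω => f (fun j => -(X j ω)))|MeasurableSpace.comap (X i) (borel ℝ)]
      =ᵐ[μ] -(μ[-(fun ω => f (fun j => -(X j ω)))|MeasurableSpace.comap (X i) (borel ℝ)]) := by
    have h4 := condExp_neg (μ := μ) (m := MeasurableSpace.comap (X i) (borel ℝ))
      (-(fun ω => f (fun j => -(X j ω))))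
    rwa [neg_neg] at h4
  show μ[(fun ω => f (fun j => -(X j ω)))|MeasurableSpace.comap (fun ω => -(X i ω)) (borel ℝ)]
      =ᵐ[μ] fun ω => -(g (-(-(X i ω))))
  rw [hσ]
  filter_upwards [h3, hneg] with ω h3ω hnω
  rw [h3ω, Pi.neg_apply, hnω, neg_neg]

lemma prod_le_of_PDS_upper {n : ℕ} (μ : Measure Ω) [IsProbabilityMeasure μ]
    (X : Fin n → Ω → ℝ) (hXm : ∀ i, Measurable (X i)) (hPDS : PDS μ X)
    (A : Fin n → Set ℝ) (hAm : ∀ i, MeasurableSet (A i)) (hAu : ∀ i, IsUpperSet (A i))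
    (s : Finset (Fin n)) :
    (∏ i ∈ s, (μ {ω | X i ω ∈ A i}).toReal) ≤ (μ {ω | ∀ i ∈ s, X i ω ∈ A i}).toReal := by
  classical
  induction s using Finset.induction with
  | empty =>
    simp [measure_univ]
  | insert _ _ hi ih =>
    rename_i i s
    -- set-up
    have hle : MeasurableSpace.comap (X i) (borel ℝ) ≤ ‹MeasurableSpace Ω› := by
      rw [← BorelSpace.measurable_eq]
      exact measurable_iff_comap_le.mp (hXm i)
    haveI : SigmaFinite (μ.trim hle) := inferInstance
    set S : Set Ω := {ω | ∀ j ∈ s, X j ω ∈ A j} with hS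
    set T : Set Ω := X i ⁻¹' (A i) with hT
    have hTm : MeasurableSet T := hXm i (hAm i)
    have hTσ : MeasurableSet[MeasurableSpace.comap (X i) (borel ℝ)] T := by
      refine ⟨A i, ?_, rfl⟩
      rw [← BorelSpace.measurable_eq]
      exact hAm i
    have hSm : MeasurableSet S := by
      have : S = ⋂ j ∈ s, X j ⁻¹' (A j) := by
        ext ω; simp [hS]
      rw [this]
      exact MeasurableSet.biInter s.countable_toSet (fun j _ => hXm j (hAm j))
    -- the increasing function f
    set f : (Fin n → ℝ) → ℝ :=
      Set.indicator {u : Fin n → ℝ | ∀ j ∈ s, u j ∈ A j} (fun _ => (1:ℝ)) with hfdef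
    have hf_mono : Monotone f := by
      refine indicator_one_mono' ?_
      intro u v huv hu j hj
      exact hAu j (huv j) (hu j hj)
    have hf_dep : ∀ a b : Fin n → ℝ, (∀ j, j ≠ i → a j = b j) → f a = f b := by
      intro a b hab
      have h1 : (∀ j ∈ s, a j ∈ A j) ↔ (∀ j ∈ s, b j ∈ A j) := by
        refine forall₂_congr fun j hj => ?_
        rw [hab j (by rintro rfl; exact hi hj)]
      simp only [hfdef, Set.indicator_apply, Set.mem_setOf_eq, h1]
    obtain ⟨g, hg_mono, hg_ae⟩ := hPDS i f hf_mono hf_dep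
    set F : Ω → ℝ := S.indicator (fun _ => (1:ℝ)) with hFdef
    have hFS : (fun ω => f (fun j => X j ω)) = F := by
      funext ω
      by_cases h : ∀ j ∈ s, X j ω ∈ A j
      · rw [hfdef, Set.indicator_of_mem
          (show (fun j => X j ω) ∈ {u : Fin n → ℝ | ∀ j ∈ s, u j ∈ A j} from h),
          hFdef, Set.indicator_of_mem (show ω ∈ S from h)]
      · rw [hfdef, Set.indicator_of_notMem
          (show (fun j => X j ω) ∉ {u : Fin n → ℝ | ∀ j ∈ s, u j ∈ A j} from h),
          hFdef, Set.indicator_of_notMem (show ω ∉ S from h)]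
    rw [hFS] at hg_ae
    have hFm : Measurable F := measurable_const.indicator hSm
    have hF01 : ∀ ω, F ω ∈ Icc (0:ℝ) 1 := fun ω => indicator_one_mem_Icc' ω
    have hFint : Integrable F μ := integrable_of_mem01 hFm
      (fun ω => abs_le.2 ⟨by linarith [(hF01 ω).1], (hF01 ω).2⟩)
    -- bounds on the conditional expectation
    have h0 : (0 : Ω → ℝ) ≤ᵐ[μ] μ[F|MeasurableSpace.comap (X i) (borel ℝ)] :=
      condExp_nonneg (Filter.Eventually.of_forall fun ω => (hF01 ω).1)
    have h1 : μ[F|MeasurableSpace.comap (X i) (borel ℝ)] ≤ᵐ[μ] (fun _ => (1:ℝ)) := by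
      have hm := condExp_mono (m := MeasurableSpace.comap (X i) (borel ℝ)) hFint
        (integrable_const (1:ℝ)) (Filter.Eventually.of_forall fun ω => (hF01 ω).2)
      have hc : μ[(fun _ : Ω => (1:ℝ))|MeasurableSpace.comap (X i) (borel ℝ)] = fun _ => (1:ℝ) :=
        condExp_const hle 1
      rw [hc] at hm
      exact hm
    -- truncation of g
    set g' : ℝ → ℝ := fun t => max 0 (min (g t) 1) with hg'def
    have hg'_mono : Monotone g' := monotone_const.max (hg_mono.min monotone_const)
    have hg'01 : ∀ t, g' t ∈ Icc (0:ℝ) 1 :=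
      fun t => ⟨le_max_left _ _, max_le zero_le_one (min_le_right _ _)⟩
    have hg'_ae : μ[F|MeasurableSpace.comap (X i) (borel ℝ)] =ᵐ[μ] fun ω => g' (X i ω) := by
      filter_upwards [hg_ae, h0, h1] with ω hgω h0ω h1ω
      simp only [Pi.zero_apply] at h0ω
      rw [hgω] at h0ω h1ω
      rw [hgω, hg'def]
      simp only
      rw [min_eq_left h1ω, max_eq_right h0ω]
    -- the indicator of A i
    set φ : ℝ → ℝ := (A i).indicator (fun _ => (1:ℝ)) with hφdef
    have hφ_mono : Monotone φ := indicator_one_mono' (hAu i)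
    have hφ01 : ∀ t, φ t ∈ Icc (0:ℝ) 1 := fun t => indicator_one_mem_Icc' t
    -- Step 1 : μ (T ∩ S) = ∫ over T of F
    have step1 : (μ (T ∩ S)).toReal = ∫ ω in T, F ω ∂μ := by
      rw [hFdef, integral_indicator_one'' hSm, Measure.restrict_apply hSm, Set.inter_comm]
    -- Step 2 : conditioning
    have step2 : ∫ ω in T, F ω ∂μ = ∫ ω in T, g' (X i ω) ∂μ := by
      rw [← setIntegral_condExp hle hFint hTσ]
      exact setIntegral_congr_ae hTm (hg'_ae.mono fun ω hω _ => hω)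
    -- Step 3 : as an indicator product
    have step3 : ∫ ω in T, g' (X i ω) ∂μ = ∫ ω, φ (X i ω) * g' (X i ω) ∂μ := by
      rw [← integral_indicator hTm]
      congr 1
      funext ω
      by_cases h : X i ω ∈ A i
      · rw [Set.indicator_of_mem (show ω ∈ T from h), hφdef, Set.indicator_of_mem h, one_mul]
      · rw [Set.indicator_of_notMem (show ω ∉ T from h), hφdef,
          Set.indicator_of_notMem h, zero_mul]
    -- Step 5 : first marginal
    have step5 : ∫ ω, φ (X i ω) ∂μ = (μ {ω | X i ω ∈ A i}).toReal := by
      have : (fun ω => φ (X i ω)) = T.indicator (fun _ => (1:ℝ)) := by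
        funext ω
        by_cases h : X i ω ∈ A i
        · rw [hφdef, Set.indicator_of_mem h, Set.indicator_of_mem (show ω ∈ T from h)]
        · rw [hφdef, Set.indicator_of_notMem h, Set.indicator_of_notMem (show ω ∉ T from h)]
      rw [this, integral_indicator_one'' hTm]
      rfl
    -- Step 6 : second factor
    have step6 : ∫ ω, g' (X i ω) ∂μ = (μ S).toReal := by
      rw [← integral_congr_ae hg'_ae, integral_condExp hle, hFdef,
        integral_indicator_one'' hSm]
    -- Chebyshev
    have cheb := chebyshev_corr μ (X i) (hXm i) φ g' hφ_mono hg'_mono hφ01 hg'01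
    -- put it together
    have hset : {ω | ∀ j ∈ insert i s, X j ω ∈ A j} = T ∩ S := by
      ext ω
      simp [hS, hT, Finset.mem_insert, or_imp, forall_and]
    rw [hset, Finset.prod_insert hi]
    calc (μ {ω | X i ω ∈ A i}).toReal * ∏ j ∈ s, (μ {ω | X j ω ∈ A j}).toReal
        ≤ (μ {ω | X i ω ∈ A i}).toReal * (μ S).toReal :=
          mul_le_mul_of_nonneg_left ih ENNReal.toReal_nonneg
      _ = (∫ ω, φ (X i ω) ∂μ) * ∫ ω, g' (X i ω) ∂μ := by rw [step5, step6]
      _ ≤ ∫ ω, φ (X i ω) * g' (X i ω) ∂μ := cheb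
      _ = (μ (T ∩ S)).toReal := by rw [← step3, ← step2, ← step1]

/-- PDS implies POD. -/
theorem POD_of_PDS
    {n : ℕ} (μ : Measure Ω) [IsProbabilityMeasure μ]
    (X : Fin n → Ω → ℝ) (hXm : ∀ i, Measurable (X i))
    (hPDS : PDS μ X) : POD μ X := by
  intro x
  constructor
  · -- lower orthant: apply the upper-set lemma to -X
    have h := prod_le_of_PDS_upper μ (fun i ω => -(X i ω)) (fun i => (hXm i).neg)
      (pds_neg hPDS) (fun i => Ici (-(x i))) (fun i => measurableSet_Ici)
      (fun i => isUpperSet_Ici _) Finset.univ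
    have h1 : ∀ i : Fin n, {ω | (fun i ω => -(X i ω)) i ω ∈ Ici (-(x i))} = {ω | X i ω ≤ x i} := by
      intro i; ext ω; simp
    have h2 : {ω | ∀ i ∈ Finset.univ, (fun i ω => -(X i ω)) i ω ∈ Ici (-(x i))}
        = {ω | ∀ i, X i ω ≤ x i} := by
      ext ω; simp
    simp only [h1, h2] at h
    simpa using h
  · have h := prod_le_of_PDS_upper μ X hXm hPDS (fun i => Ioi (x i))
      (fun i => measurableSet_Ioi) (fun i => isUpperSet_Ioi _) Finset.univ
    have h1 : ∀ i : Fin n, {ω | X i ω ∈ Ioi (x i)} = {ω | x i < X i ω} := by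
      intro i; ext ω; simp
    have h2 : {ω | ∀ i ∈ Finset.univ, X i ω ∈ Ioi (x i)} = {ω | ∀ i, x i < X i ω} := by
      ext ω; simp
    simp only [h1, h2] at h
    simpa using h
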